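/- Let F₂ be the free group on two generators x, y, let φ : F₂ → ℤ be the homomorphism with φ(x) = φ(y) = 1, and let Γ = {(h₁, h₂) ∈ F₂ × F₂ : φ(h₁) = φ(h₂)}. Let S = {(x,1), (y,1), (1,x), (1,y)} (a generating set of F₂ × F₂) and T = {(x,x), (y,x), (x,y)}. Then T generates Γ, and Γ is undistorted in F₂ × F₂: there is a constant C > 0 such that ℓ_T(γ) ≤ C · ℓ_S(γ) for every γ ∈ Γ. -/

import Mathlib

noncomputable section

/-- The word length of `g` with respect to a set `U` of generators: the least `n` such that
`g` is a product of `n` elements of `U ∪ U⁻¹` (and `0` for the identity). -/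
def wordLength {G : Type*} [Group G] (U : Set G) (g : G) : ℕ :=
  sInf {n : ℕ | ∃ l : List G, l.length = n ∧ (∀ a ∈ l, a ∈ U ∨ a⁻¹ ∈ U) ∧ l.prod = g}

/-- The free group on two generators. -/
abbrev F₂ := FreeGroup (Fin 2)

/-- The first free generator `x`. -/
def xg : F₂ := FreeGroup.of 0

/-- The second free generator `y`. -/
def yg : F₂ := FreeGroup.of 1

/-- The homomorphism `φ : F₂ → ℤ` with `φ(x) = φ(y) = 1`. -/
def φ : F₂ →* Multiplicative ℤ := FreeGroup.lift fun _ => Multiplicative.ofAdd 1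

/-- The homomorphism `ψ(h₁, h₂) = φ(h₁) − φ(h₂)`, whose kernel is the fiber product
`Γ = {(h₁, h₂) : φ(h₁) = φ(h₂)}`. -/
def ψ : F₂ × F₂ →* Multiplicative ℤ :=
  (φ.comp (MonoidHom.fst F₂ F₂)) / (φ.comp (MonoidHom.snd F₂ F₂))

/-- The standard generating set `S = {(x,1), (y,1), (1,x), (1,y)}` of `F₂ × F₂`. -/
def Sgen : Set (F₂ × F₂) := {(xg, 1), (yg, 1), (1, xg), (1, yg)}

/-- The set `T = {(x,x), (y,x), (x,y)}`. -/
def Tgen : Set (F₂ × F₂) := {(xg, xg), (yg, xg), (xg, yg)}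

/-! ### Auxiliary lemmas -/

lemma phi_xg : φ xg = Multiplicative.ofAdd 1 := FreeGroup.lift_apply_of
lemma phi_yg : φ yg = Multiplicative.ofAdd 1 := FreeGroup.lift_apply_of

/-- `x^m` for `m : Multiplicative ℤ`. -/
def xpow (m : Multiplicative ℤ) : F₂ := xg ^ m.toAdd

lemma xpow_one : xpow 1 = 1 := by simp [xpow]

lemma xpow_mul (a b : Multiplicative ℤ) : xpow (a * b) = xpow a * xpow b := by
  simp [xpow, toAdd_mul, zpow_add]

lemma xpow_inv (a : Multiplicative ℤ) : xpow a⁻¹ = (xpow a)⁻¹ := by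
  simp [xpow]

lemma xpow_phi_xg : xpow (φ xg) = xg := by simp [phi_xg, xpow]
lemma xpow_phi_yg : xpow (φ yg) = xg := by simp [phi_yg, xpow]
lemma xpow_phi_xg_inv : xpow (φ xg⁻¹) = xg⁻¹ := by
  rw [map_inv, xpow_inv, xpow_phi_xg]
lemma xpow_phi_yg_inv : xpow (φ yg⁻¹) = xg⁻¹ := by
  rw [map_inv, xpow_inv, xpow_phi_yg]

lemma psi_apply (γ : F₂ × F₂) : ψ γ = φ γ.1 * (φ γ.2)⁻¹ := rfl

/-- The key splitting lemma: from a word over `S ∪ S⁻¹` build two words over `T ∪ T⁻¹`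
representing `(A, x^{φ A})` and `(x^{φ B}, B)` where `(A, B)` is the product. -/
lemma split (l : List (F₂ × F₂)) (hl : ∀ a ∈ l, a ∈ Sgen ∨ a⁻¹ ∈ Sgen) :
    ∃ l₁ l₂ : List (F₂ × F₂),
      (∀ a ∈ l₁, a ∈ Tgen ∨ a⁻¹ ∈ Tgen) ∧ (∀ a ∈ l₂, a ∈ Tgen ∨ a⁻¹ ∈ Tgen) ∧
      l₁.length + l₂.length = l.length ∧
      (φ l.prod.1).toAdd.natAbs ≤ l₁.length ∧
      l₁.prod = (l.prod.1, xpow (φ l.prod.1)) ∧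
      l₂.prod = (xpow (φ l.prod.2), l.prod.2) := by
  induction l with
  | nil =>
    refine ⟨[], [], by simp, by simp, by simp, by simp, ?_, ?_⟩ <;>
      simp [xpow_one] <;> rfl
  | cons a l ih =>
    obtain ⟨l₁, l₂, h₁, h₂, hlen, hbd, hp₁, hp₂⟩ :=
      ih (fun b hb => hl b (List.mem_cons_of_mem _ hb))
    have ha := hl a List.mem_cons_self
    set A := l.prod.1 with hA
    set B := l.prod.2 with hB
    -- helper for "first coordinate" letters
    have step1 : ∀ (s t2 : F₂), t2 = xpow (φ s) →
        ((s, t2) ∈ Tgen ∨ (s, t2)⁻¹ ∈ Tgen) → (φ s).toAdd.natAbs ≤ 1 → a = (s, 1) →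
        ∃ l₁' l₂' : List (F₂ × F₂),
          (∀ b ∈ l₁', b ∈ Tgen ∨ b⁻¹ ∈ Tgen) ∧ (∀ b ∈ l₂', b ∈ Tgen ∨ b⁻¹ ∈ Tgen) ∧
          l₁'.length + l₂'.length = (a :: l).length ∧
          (φ (a :: l).prod.1).toAdd.natAbs ≤ l₁'.length ∧
          l₁'.prod = ((a :: l).prod.1, xpow (φ (a :: l).prod.1)) ∧
          l₂'.prod = (xpow (φ (a :: l).prod.2), (a :: l).prod.2) := by
      intro s t2 ht2 htT hbd1 haeq
      subst haeq
      subst ht2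
      refine ⟨(s, xpow (φ s)) :: l₁, l₂, ?_, h₂, ?_, ?_, ?_, ?_⟩
      · intro b hb
        rcases List.mem_cons.1 hb with rfl | hb
        · exact htT
        · exact h₁ b hb
      · simp only [List.length_cons]; omega
      · have heq : (φ (((s, 1) :: l).prod.1)).toAdd = (φ s).toAdd + (φ A).toAdd := by
          simp [← toAdd_mul, ← map_mul]
          rfl
        calc (φ (((s, 1) :: l).prod.1)).toAdd.natAbs
            ≤ (φ s).toAdd.natAbs + (φ A).toAdd.natAbs := by
              rw [heq]; exact Int.natAbs_add_le _ _
          _ ≤ 1 + l₁.length := Nat.add_le_add hbd1 hbd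
          _ = ((s, xpow (φ s)) :: l₁).length := by simp [Nat.add_comm]
      · simp [hp₁, map_mul, xpow_mul]
        exact ⟨rfl, rfl⟩
      · simp [hp₂]
        exact ⟨rfl, rfl⟩
    -- helper for "second coordinate" letters
    have step2 : ∀ (s t1 : F₂), t1 = xpow (φ s) →
        ((t1, s) ∈ Tgen ∨ (t1, s)⁻¹ ∈ Tgen) → a = (1, s) →
        ∃ l₁' l₂' : List (F₂ × F₂),
          (∀ b ∈ l₁', b ∈ Tgen ∨ b⁻¹ ∈ Tgen) ∧ (∀ b ∈ l₂', b ∈ Tgen ∨ b⁻¹ ∈ Tgen) ∧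
          l₁'.length + l₂'.length = (a :: l).length ∧
          (φ (a :: l).prod.1).toAdd.natAbs ≤ l₁'.length ∧
          l₁'.prod = ((a :: l).prod.1, xpow (φ (a :: l).prod.1)) ∧
          l₂'.prod = (xpow (φ (a :: l).prod.2), (a :: l).prod.2) := by
      intro s t1 ht1 htT haeq
      subst haeq
      subst ht1
      refine ⟨l₁, (xpow (φ s), s) :: l₂, h₁, ?_, ?_, ?_, ?_, ?_⟩
      · intro b hb
        rcases List.mem_cons.1 hb with rfl | hb
        · exact htT
        · exact h₂ b hb
      · simp only [List.length_cons]; omega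
      · simpa using hbd
      · simpa using hp₁
      · simp [hp₂, map_mul, xpow_mul]
        exact ⟨rfl, rfl⟩
    have hx0 : (xg, xg) ∈ Tgen := by simp [Tgen]
    have hy0 : (yg, xg) ∈ Tgen := by simp [Tgen]
    have hxy0 : (xg, yg) ∈ Tgen := by simp [Tgen]
    rcases ha with ha | ha
    · simp only [Sgen, Set.mem_insert_iff, Set.mem_singleton_iff] at ha
      rcases ha with rfl | rfl | rfl | rfl
      · exact step1 xg xg xpow_phi_xg.symm (Or.inl hx0) (by simp [phi_xg]) rfl
      · exact step1 yg xg xpow_phi_yg.symm (Or.inl hy0) (by simp [phi_yg]) rfl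
      · exact step2 xg xg xpow_phi_xg.symm (Or.inl hx0) rfl
      · exact step2 yg xg xpow_phi_xg.symm (Or.inl hxy0) rfl
    · simp only [Sgen, Set.mem_insert_iff, Set.mem_singleton_iff] at ha
      rcases ha with h | h | h | h
      all_goals
        have haeq := congrArg Inv.inv h
        all_goals simp only [inv_inv, Prod.inv_mk, inv_one] at haeq
      · exact step1 xg⁻¹ xg⁻¹ xpow_phi_xg_inv.symm
          (Or.inr (by simpa using hx0)) (by simp [phi_xg]) haeq
      · exact step1 yg⁻¹ xg⁻¹ xpow_phi_yg_inv.symm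
          (Or.inr (by simpa using hy0)) (by simp [phi_yg]) haeq
      · exact step2 xg⁻¹ xg⁻¹ xpow_phi_xg_inv.symm
          (Or.inr (by simpa using hx0)) haeq
      · exact step2 yg⁻¹ xg⁻¹ xpow_phi_xg_inv.symm
          (Or.inr (by simpa using hxy0)) haeq

/-- Padding: `(x^m, x^m)` as a `T ∪ T⁻¹`-word of length `|m|`. -/
lemma pad (m : Multiplicative ℤ) :
    ∃ l : List (F₂ × F₂), (∀ a ∈ l, a ∈ Tgen ∨ a⁻¹ ∈ Tgen) ∧
      l.length = m.toAdd.natAbs ∧ l.prod = (xpow m, xpow m) := by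
  have hx0 : (xg, xg) ∈ Tgen := by simp [Tgen]
  refine ⟨List.replicate m.toAdd.natAbs (if 0 ≤ m.toAdd then (xg, xg) else (xg, xg)⁻¹),
    ?_, by simp, ?_⟩
  · intro b hb
    rw [List.mem_replicate] at hb
    rcases hb with ⟨-, rfl⟩
    rcases le_or_gt 0 m.toAdd with h | h
    · rw [if_pos h]; exact Or.inl hx0
    · rw [if_neg (not_le.2 h)]; exact Or.inr (by simpa using hx0)
  · rw [List.prod_replicate]
    have key : (xg, xg) ^ m.toAdd = ((xpow m, xpow m) : F₂ × F₂) := by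
      simp [xpow, Prod.pow_def]
    rw [← key]
    rcases le_or_gt 0 m.toAdd with h | h
    · rw [if_pos h, ← zpow_natCast]
      congr 1
      omega
    · rw [if_neg (not_le.2 h), inv_pow, ← zpow_natCast, ← zpow_neg]
      congr 1
      omega

lemma mem_ker_iff (γ : F₂ × F₂) : γ ∈ ψ.ker ↔ φ γ.1 = φ γ.2 := by
  rw [MonoidHom.mem_ker, psi_apply, mul_inv_eq_one]

/-- The main construction: any `S`-word for `γ ∈ ker ψ` yields a `T`-word of at most
twice the length. -/
lemma main_construction (γ : F₂ × F₂) (hγ : γ ∈ ψ.ker) (l : List (F₂ × F₂))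
    (hl : ∀ a ∈ l, a ∈ Sgen ∨ a⁻¹ ∈ Sgen) (hprod : l.prod = γ) :
    ∃ L : List (F₂ × F₂), (∀ a ∈ L, a ∈ Tgen ∨ a⁻¹ ∈ Tgen) ∧
      L.length ≤ 2 * l.length ∧ L.prod = γ := by
  obtain ⟨l₁, l₂, h₁, h₂, hlen, hbd, hp₁, hp₂⟩ := split l hl
  have hAB : φ l.prod.1 = φ l.prod.2 := by
    rw [hprod]; exact (mem_ker_iff γ).1 hγ
  set m := φ l.prod.1 with hm
  obtain ⟨mid, hmid, hmidlen, hmidprod⟩ := pad m⁻¹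
  refine ⟨l₁ ++ mid ++ l₂, ?_, ?_, ?_⟩
  · intro b hb
    simp only [List.mem_append] at hb
    rcases hb with (hb | hb) | hb
    · exact h₁ b hb
    · exact hmid b hb
    · exact h₂ b hb
  · have hmlen : mid.length ≤ l₁.length := by
      rw [hmidlen]
      simpa using hbd
    simp only [List.length_append]
    omega
  · rw [List.prod_append, List.prod_append, hp₁, hp₂, hmidprod, ← hAB]
    have e1 : (xpow m⁻¹ * xpow m : F₂) = 1 := by rw [← xpow_mul, inv_mul_cancel, xpow_one]
    have e2 : (xpow m * xpow m⁻¹ : F₂) = 1 := by rw [← xpow_mul, mul_inv_cancel, xpow_one]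
    rw [Prod.mk_mul_mk, Prod.mk_mul_mk, mul_assoc _ (xpow m⁻¹), e1, mul_one, e2, one_mul,
      ← hprod]

lemma closure_Sgen : Subgroup.closure Sgen = ⊤ := by
  rw [eq_top_iff]
  rintro ⟨a, b⟩ -
  have h1 : ∀ a : F₂, ((a, 1) : F₂ × F₂) ∈ Subgroup.closure Sgen := by
    intro a
    refine FreeGroup.induction_on a ?_ ?_ ?_ ?_
    · exact one_mem _
    · intro i
      fin_cases i
      · exact Subgroup.subset_closure
          (show ((xg, 1) : F₂ × F₂) ∈ Sgen from Set.mem_insert _ _)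
      · exact Subgroup.subset_closure
          (show ((yg, 1) : F₂ × F₂) ∈ Sgen from
            Set.mem_insert_iff.2 (Or.inr (Set.mem_insert _ _)))
    · intro i h
      simpa using inv_mem h
    · intro x y hx hy
      simpa using mul_mem hx hy
  have h2 : ∀ b : F₂, (((1 : F₂), b) : F₂ × F₂) ∈ Subgroup.closure Sgen := by
    intro b
    refine FreeGroup.induction_on b ?_ ?_ ?_ ?_
    · exact one_mem _
    · intro i
      fin_cases i
      · exact Subgroup.subset_closure
          (show (((1 : F₂), xg) : F₂ × F₂) ∈ Sgen from
            Set.mem_insert_iff.2 (Or.inr (Set.mem_insert_iff.2 (Or.inr (Set.mem_insert _ _)))))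
      · exact Subgroup.subset_closure
          (show (((1 : F₂), yg) : F₂ × F₂) ∈ Sgen from
            Set.mem_insert_iff.2 (Or.inr (Set.mem_insert_iff.2 (Or.inr
              (Set.mem_insert_iff.2 (Or.inr rfl))))))
    · intro i h
      simpa using inv_mem h
    · intro x y hx hy
      simpa using mul_mem hx hy
  have : ((a, b) : F₂ × F₂) = (a, 1) * (1, b) := by simp
  rw [this]
  exact mul_mem (h1 a) (h2 b)

lemma exists_word (γ : F₂ × F₂) (U : Set (F₂ × F₂)) (h : γ ∈ Subgroup.closure U) :
    ∃ l : List (F₂ × F₂), (∀ a ∈ l, a ∈ U ∨ a⁻¹ ∈ U) ∧ l.prod = γ := by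
  have : γ ∈ Submonoid.closure (U ∪ U⁻¹) := by
    rw [← Subgroup.closure_toSubmonoid] at *
    exact h
  obtain ⟨l, hl, hp⟩ := Submonoid.exists_list_of_mem_closure this
  refine ⟨l, ?_, hp⟩
  intro a ha
  rcases hl a ha with h | h
  · exact Or.inl h
  · exact Or.inr (Set.mem_inv.1 h)

/-- `T` generates `Γ = ker ψ`, and `Γ` is undistorted in `F₂ × F₂`: there is a constant
`C > 0` with `ℓ_T(γ) ≤ C · ℓ_S(γ)` for every `γ ∈ Γ`. -/
theorem fiber_product_generated_by_T_and_undistorted :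
    Subgroup.closure Tgen = ψ.ker ∧
    ∃ C : ℕ, 0 < C ∧ ∀ γ ∈ ψ.ker, wordLength Tgen γ ≤ C * wordLength Sgen γ := by
  have key : ∀ γ ∈ ψ.ker, ∃ l : List (F₂ × F₂),
      (∀ a ∈ l, a ∈ Sgen ∨ a⁻¹ ∈ Sgen) ∧ l.prod = γ ∧
      l.length = wordLength Sgen γ := by
    intro γ hγ
    have hne : {n : ℕ | ∃ l : List (F₂ × F₂), l.length = n ∧
        (∀ a ∈ l, a ∈ Sgen ∨ a⁻¹ ∈ Sgen) ∧ l.prod = γ}.Nonempty := by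
      obtain ⟨l, hl, hp⟩ := exists_word γ Sgen (by rw [closure_Sgen]; trivial)
      exact ⟨l.length, l, rfl, hl, hp⟩
    obtain ⟨l, hlen, hl, hp⟩ := Nat.sInf_mem hne
    exact ⟨l, hl, hp, hlen⟩
  constructor
  · apply le_antisymm
    · rw [Subgroup.closure_le]
      intro t ht
      simp only [Tgen, Set.mem_insert_iff, Set.mem_singleton_iff] at ht
      rcases ht with rfl | rfl | rfl <;>
        (show _ ∈ ψ.ker; rw [mem_ker_iff]) <;> simp [phi_xg, phi_yg]
    · intro γ hγ
      obtain ⟨l, hl, hp, -⟩ := key γ hγ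
      obtain ⟨L, hL, -, hLp⟩ := main_construction γ hγ l hl hp
      rw [← hLp]
      refine list_prod_mem ?_
      intro b hb
      rcases hL b hb with h | h
      · exact Subgroup.subset_closure h
      · simpa using inv_mem (Subgroup.subset_closure h)
  · refine ⟨2, by norm_num, ?_⟩
    intro γ hγ
    obtain ⟨l, hl, hp, hlen⟩ := key γ hγ
    obtain ⟨L, hL, hLlen, hLp⟩ := main_construction γ hγ l hl hp
    calc wordLength Tgen γ ≤ L.length := Nat.sInf_le ⟨L, rfl, hL, hLp⟩
      _ ≤ 2 * l.length := hLlen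
      _ = 2 * wordLength Sgen γ := by rw [hlen]
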